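/- For the dihedral group D_{2n} of order 2n with n ≥ 4 even, the commuting probability equals (n+6)/(4n). -/
import Mathlib

open Finset DihedralGroup

namespace CommProbDihedralAux

variable {n : ℕ}

/-- The standard decomposition of the dihedral group into two copies of `ZMod n`. -/
def dihedralEquivSum (n : ℕ) : DihedralGroup n ≃ ZMod n ⊕ ZMod n where
  toFun x := match x with
    | .r j => Sum.inl j
    | .sr j => Sum.inr j
  invFun s := match s with
    | Sum.inl j => .r j
    | Sum.inr j => .sr j
  left_inv := by rintro (x | x) <;> rfl
  right_inv := by rintro (x | x) <;> rfl

/-- Split a subtype of the dihedral group along the two constructors. -/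
def commSplit (Q : DihedralGroup n → Prop) :
    {y : DihedralGroup n // Q y} ≃ {j : ZMod n // Q (.r j)} ⊕ {j : ZMod n // Q (.sr j)} where
  toFun y := match y with
    | ⟨.r j, h⟩ => Sum.inl ⟨j, h⟩
    | ⟨.sr j, h⟩ => Sum.inr ⟨j, h⟩
  invFun s := match s with
    | Sum.inl ⟨j, h⟩ => ⟨.r j, h⟩
    | Sum.inr ⟨j, h⟩ => ⟨.sr j, h⟩
  left_inv := by rintro ⟨(j | j), h⟩ <;> rfl
  right_inv := by rintro (⟨j, h⟩ | ⟨j, h⟩) <;> rfl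

lemma card_two_solutions [NeZero n] (hn : 4 ≤ n) (heven : Even n) :
    (univ.filter fun i : ZMod n => i + i = 0).card = 2 := by
  have h2 : n / 2 < n := by omega
  have hval : (((n / 2 : ℕ) : ZMod n)).val = n / 2 := ZMod.val_cast_of_lt h2
  have hiff : ∀ i : ZMod n, i + i = 0 ↔ i = 0 ∨ i = ((n / 2 : ℕ) : ZMod n) := by
    intro i
    constructor
    · intro h
      have hv : ((2 * i.val : ℕ) : ZMod n) = 0 := by
        push_cast
        rw [two_mul, ZMod.natCast_val, ZMod.cast_id]
        exact h
      rw [ZMod.natCast_eq_zero_iff] at hv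
      obtain ⟨k, hk⟩ := hv
      have hvlt : i.val < n := ZMod.val_lt i
      have hklt : k < 2 := by
        by_contra hk2
        push_neg at hk2
        have : n * 2 ≤ n * k := Nat.mul_le_mul_left n hk2
        omega
      interval_cases k
      · left
        have : i.val = 0 := by omega
        rwa [← ZMod.val_eq_zero]
      · right
        obtain ⟨m, hm⟩ := heven
        have hv2 : i.val = n / 2 := by omega
        exact ZMod.val_injective n (by rw [hval, hv2])
    · rintro (rfl | rfl)
      · simp
      · rw [← Nat.cast_add]
        have : n / 2 + n / 2 = n := by
          obtain ⟨m, hm⟩ := heven; omega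
        rw [this, ZMod.natCast_self]
  have hne : (0 : ZMod n) ≠ ((n / 2 : ℕ) : ZMod n) := by
    intro h
    have := congrArg ZMod.val h
    rw [ZMod.val_zero, hval] at this
    omega
  have heq : (univ.filter fun i : ZMod n => i + i = 0) =
      ({0, ((n / 2 : ℕ) : ZMod n)} : Finset (ZMod n)) := by
    ext i
    simp [hiff i]
  rw [heq, card_insert_of_notMem (by simpa using hne), card_singleton]

lemma nat_card_two_solutions [NeZero n] (hn : 4 ≤ n) (heven : Even n) :
    Nat.card {j : ZMod n // j + j = 0} = 2 := by
  rw [Nat.card_eq_fintype_card, Fintype.card_subtype, card_two_solutions hn heven]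

lemma nat_card_sigma {ι : Type*} [Fintype ι] (f : ι → Type*) [∀ i, Finite (f i)] :
    Nat.card (Σ i, f i) = ∑ i, Nat.card (f i) := by
  letI : ∀ i, Fintype (f i) := fun i => Fintype.ofFinite _
  simp only [Nat.card_eq_fintype_card, Fintype.card_sigma]

lemma card_comm_r [NeZero n] (i : ZMod n) :
    Nat.card {y : DihedralGroup n // .r i * y = y * .r i}
      = n + (if i + i = 0 then n else 0) := by
  rw [Nat.card_congr (commSplit _), Nat.card_sum]
  congr 1
  · rw [Nat.card_congr (Equiv.subtypeUnivEquiv fun j => by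
      rw [r_mul_r, r_mul_r, add_comm]), Nat.card_zmod]
  · split_ifs with hi
    · rw [Nat.card_congr (Equiv.subtypeUnivEquiv fun j => by
        rw [r_mul_sr, sr_mul_r]
        congr 1
        rw [sub_eq_add_neg, neg_eq_iff_add_eq_zero.mpr hi]), Nat.card_zmod]
    · rw [Nat.card_eq_zero]
      left
      constructor
      rintro ⟨j, hj⟩
      rw [r_mul_sr, sr_mul_r, sr.injEq, sub_eq_add_neg, add_right_inj] at hj
      exact hi (neg_eq_iff_add_eq_zero.mp hj)

lemma card_comm_sr [NeZero n] (hn : 4 ≤ n) (heven : Even n) (i : ZMod n) :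
    Nat.card {y : DihedralGroup n // .sr i * y = y * .sr i} = 4 := by
  rw [Nat.card_congr (commSplit _), Nat.card_sum]
  have e1 : {j : ZMod n // DihedralGroup.sr i * .r j = .r j * .sr i}
      ≃ {j : ZMod n // j + j = 0} :=
    Equiv.subtypeEquivRight fun j => by
      rw [sr_mul_r, r_mul_sr, sr.injEq, sub_eq_add_neg, add_right_inj]
      exact eq_neg_iff_add_eq_zero
  have e2 : {j : ZMod n // DihedralGroup.sr i * .sr j = .sr j * .sr i}
      ≃ {j : ZMod n // j + j = 0} :=
    (Equiv.subRight i).subtypeEquiv fun j => by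
      rw [sr_mul_sr, sr_mul_sr, r.injEq, Equiv.subRight_apply,
        show i - j = -(j - i) from (neg_sub j i).symm]
      exact eq_neg_iff_add_eq_zero
  have h1 := (Nat.card_congr e1).trans (nat_card_two_solutions hn heven)
  have h2 := (Nat.card_congr e2).trans (nat_card_two_solutions hn heven)
  omega

lemma card_commute_pairs (hn : 4 ≤ n) (heven : Even n) :
    Nat.card {p : DihedralGroup n × DihedralGroup n // Commute p.1 p.2} = n * n + 6 * n := by
  haveI : NeZero n := ⟨by omega⟩
  show Nat.card {p : DihedralGroup n × DihedralGroup n // p.1 * p.2 = p.2 * p.1} = _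
  rw [Nat.card_congr (Equiv.subtypeProdEquivSigmaSubtype
    fun a b : DihedralGroup n => a * b = b * a), nat_card_sigma]
  rw [← Equiv.sum_comp (dihedralEquivSum n).symm
    (fun x => Nat.card {y : DihedralGroup n // x * y = y * x}), Fintype.sum_sum_type]
  have hr : ∀ i : ZMod n, (dihedralEquivSum n).symm (Sum.inl i) = DihedralGroup.r i := fun _ => rfl
  have hs : ∀ i : ZMod n, (dihedralEquivSum n).symm (Sum.inr i) = DihedralGroup.sr i := fun _ => rfl
  simp only [hr, hs, card_comm_r, card_comm_sr hn heven]
  rw [Finset.sum_add_distrib, Finset.sum_const, Finset.sum_const, ← Finset.sum_filter,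
    Finset.sum_const, card_two_solutions hn heven, card_univ, ZMod.card, smul_eq_mul,
    smul_eq_mul, smul_eq_mul]
  ring

end CommProbDihedralAux

theorem commProb_dihedralGroup_even (n : ℕ) (hn : 4 ≤ n) (heven : Even n) :
    commProb (DihedralGroup n) = ((n : ℚ) + 6) / (4 * n) := by
  haveI : NeZero n := ⟨by omega⟩
  rw [commProb_def, CommProbDihedralAux.card_commute_pairs hn heven,
    Nat.card_eq_fintype_card, DihedralGroup.card]
  have hn0 : (n : ℚ) ≠ 0 := Nat.cast_ne_zero.mpr (by omega)
  push_cast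
  field_simp
  ring
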